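/- arXiv:1912.12890 — 2 statements merged into one kernel-verified Lean document; each statement's English description precedes it below -/
import Mathlib

section
/- Fix $m>0$ and an integer $N_0 \ge 2$. For $0 \le n \le N_0$ let $X_n:[m/2,\infty)\to\mathbb{R}$ be $C^1$ and bounded, and for $1 \le n \le N_0$ let $Y_n:[m/2,\infty)\to\mathbb{R}$ be continuous. Assume: (i) $Y_1(r) = \frac{r^2\psi_0(r)}{3m} X_1'(r)$ and the limit $X_{1\infty} = \lim_{r\to\infty} X_1(r)$ exists; (ii) for each $2 \le n \le N_0$, with $N_n = \frac{n(n+1)}{2}$, the improper integrals $I_n = \int_{m/2}^{\infty}\big[(r X_n' - \beta_n Y_n)^2 + 2(N_n-1)\alpha X_n Y_n\big]\frac{dr}{\alpha r^2 \psi_0}$ and $\int_{m/2}^{\infty}\frac{\beta_n^2}{\alpha r^2\psi_0}\big(Y_n - \frac{r}{\beta_n}X_n' + \frac{(N_n-1)\alpha}{\beta_n^2}X_n\big)^2 dr$ converge. Then, with $I_1 = \int_{m/2}^{\infty}\frac{X_1 Y_1}{r^2\psi_0}dr$ and $c_n = \frac{2n(n+1)}{(n-1)(n+2)(2n+1)}$: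 $\frac{2m}{3} I_1 + \frac{m}{2}\sum_{n=2}^{N_0} c_n I_n + \frac12\sum_{n=0}^{N_0}\frac{X_n(m/2)^2}{2n+1} \;\ge\; \frac19 X_{1\infty}^2 + \frac12\sum_{n=0}^{N_0}\frac{X_n(m/2)^2}{(2n+1)(n^2+n+1)}$. -/
/-- `ψ₀(r) = 1 + m/(2r)`. -/
noncomputable def psi0 (m r : ℝ) : ℝ := 1 + m / (2 * r)

/-- `α(r) = 1 - m/(2r)`. -/
noncomputable def alphaF (m r : ℝ) : ℝ := 1 - m / (2 * r)

/-- `β_n(r) = (n(n+1)/2 - 1) ψ₀(r) + 3m/(r ψ₀(r))`. -/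
noncomputable def betaF (m : ℝ) (n : ℕ) (r : ℝ) : ℝ :=
  ((n : ℝ) * ((n : ℝ) + 1) / 2 - 1) * psi0 m r + 3 * m / (r * psi0 m r)

/-- `c_n = 2n(n+1)/((n-1)(n+2)(2n+1))`. -/
noncomputable def cC (n : ℕ) : ℝ :=
  (2 * (n : ℝ) * ((n : ℝ) + 1)) / (((n : ℝ) - 1) * ((n : ℝ) + 2) * (2 * (n : ℝ) + 1))

/-- The improper integral `∫_a^∞ f` converges and equals `L`. -/
def ImproperEq (f : ℝ → ℝ) (a L : ℝ) : Prop :=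
  (∀ b : ℝ, IntervalIntegrable f MeasureTheory.volume a b) ∧
    Filter.Tendsto (fun b : ℝ => ∫ r in a..b, f r) Filter.atTop (nhds L)



open Filter MeasureTheory Set intervalIntegral

lemma hasDerivAt_of_cd {f : ℝ → ℝ} {a r : ℝ}
    (hf : ContDiffOn ℝ 1 f (Set.Ici a)) (hr : a < r) :
    HasDerivAt f (deriv f r) r :=
  ((hf.differentiableOn one_ne_zero).differentiableAt (Ici_mem_nhds hr)).hasDerivAt

lemma I1_val (m : ℝ) (hm : 0 < m) (X Y : ℝ → ℝ)
    (hX : ContDiffOn ℝ 1 X (Set.Ici (m/2)))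
    (hY : ∀ r, Y r = r^2 * psi0 m r/(3*m) * deriv X r)
    (X1inf I1 : ℝ) (hlim : Tendsto X atTop (nhds X1inf))
    (hI : ImproperEq (fun r => X r * Y r/(r^2*psi0 m r)) (m/2) I1) :
    I1 = (X1inf^2 - X (m/2)^2)/(6*m) := by
  have hm2 : 0 < m/2 := by linarith
  have key : ∀ b : ℝ, m/2 ≤ b →
      (∫ r in (m/2)..b, X r * Y r/(r^2*psi0 m r)) = X b^2/(6*m) - X (m/2)^2/(6*m) := by
    intro b hb
    apply integral_eq_sub_of_hasDerivAt_of_le hb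
    · exact ((hX.continuousOn.pow 2).div_const _).mono (Icc_subset_Ici_self)
    · intro r hr
      have hr0 : 0 < r := lt_trans hm2 hr.1
      have hd := hasDerivAt_of_cd hX hr.1
      have h2 : HasDerivAt (fun x => X x^2/(6*m)) (2 * X r ^ 1 * deriv X r / (6*m)) r :=
        (hd.pow 2).div_const _
      refine h2.congr_deriv ?_
      rw [hY r]
      have hp : psi0 m r ≠ 0 := by
        have : 0 < psi0 m r := by
          unfold psi0; positivity
        linarith
      field_simp
      ring
    · exact hI.1 b
  have t1 : Tendsto (fun b => (∫ r in (m/2)..b, X r * Y r/(r^2*psi0 m r)))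
      atTop (nhds (X1inf^2/(6*m) - X (m/2)^2/(6*m))) := by
    have : Tendsto (fun b => X b^2/(6*m) - X (m/2)^2/(6*m)) atTop
        (nhds (X1inf^2/(6*m) - X (m/2)^2/(6*m))) :=
      (((hlim.pow 2).div_const _).sub_const _)
    refine Tendsto.congr' ?_ this
    filter_upwards [eventually_ge_atTop (m/2)] with b hb
    exact (key b hb).symm
  have := tendsto_nhds_unique hI.2 t1
  rw [this]; ring

set_option maxHeartbeats 1000000 in
lemma alg_id (k a p B r X X' Y : ℝ) (ha : a ≠ 0) (hp : p ≠ 0) (hr : r ≠ 0) (hB : B ≠ 0) :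
    ((r*X' - B*Y)^2 + 2*k*a*X*Y)/(a*r^2*p) - B^2/(a*r^2*p)*(Y - r/B*X' + k*a/B^2*X)^2
      = (k*(2*X*X')*(r*p*B) - k*X^2*(k*(a*p)))/(r*p*B)^2 := by
  field_simp
  ring

lemma rpB_id (m k r : ℝ) (hr : r ≠ 0) (hp : 1 + m/(2*r) ≠ 0) (h2 : 2*r + m ≠ 0) :
    r * (1+m/(2*r)) * (k*(1+m/(2*r)) + 3*m/(r*(1+m/(2*r))))
      = k*(r + m + m^2/(4*r)) + 3*m := by
  have he : 1 + m/(2*r) = (2*r+m)/(2*r) := by field_simp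
  rw [he]
  have h2' : r*2 + m ≠ 0 := by rwa [mul_comm]
  field_simp
  ring

set_option maxHeartbeats 1000000 in
lemma In_bound (m : ℝ) (hm : 0 < m) (n : ℕ) (hn : 2 ≤ n)
    (X Y : ℝ → ℝ) (hX : ContDiffOn ℝ 1 X (Set.Ici (m/2)))
    (hXb : ∃ C : ℝ, ∀ r : ℝ, m/2 ≤ r → |X r| ≤ C)
    (In L : ℝ)
    (hIn : ImproperEq (fun r : ℝ => ((r * deriv X r - betaF m n r * Y r) ^ 2
            + 2 * ((n : ℝ) * ((n : ℝ) + 1) / 2 - 1) * alphaF m r * X r * Y r)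
          / (alphaF m r * r ^ 2 * psi0 m r)) (m/2) In)
    (hL : ImproperEq (fun r : ℝ => (betaF m n r) ^ 2 / (alphaF m r * r ^ 2 * psi0 m r) *
          (Y r - r / betaF m n r * deriv X r
            + ((n : ℝ) * ((n : ℝ) + 1) / 2 - 1) * alphaF m r / (betaF m n r) ^ 2 * X r) ^ 2)
          (m/2) L) :
    In ≥ -(((n : ℝ) * ((n : ℝ) + 1) / 2 - 1) * X (m/2) ^ 2
            / (m * ((n : ℝ) ^ 2 + (n : ℝ) + 1))) := by
  have hm2 : (0:ℝ) < m/2 := by linarith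
  set k : ℝ := (n : ℝ) * ((n : ℝ) + 1) / 2 - 1 with hk
  have hn2 : (2:ℝ) ≤ (n:ℝ) := by exact_mod_cast hn
  have hkpos : 0 < k := by rw [hk]; nlinarith
  set h : ℝ → ℝ := fun r => k * (r + m + m^2/(4*r)) + 3*m with hh
  have hhpos : ∀ r : ℝ, m/2 ≤ r → 0 < h r := by
    intro r hr
    have hr0 : 0 < r := lt_of_lt_of_le hm2 hr
    have h1 : 0 < r + m + m^2/(4*r) := by positivity
    have h2 := mul_pos hkpos h1
    simp only [hh]; linarith
  have hfacts : ∀ r : ℝ, m/2 < r → 0 < r ∧ 0 < psi0 m r ∧ 0 < alphaF m r ∧ 0 < betaF m n r := by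
    intro r hr
    have hr0 : 0 < r := lt_trans hm2 hr
    have hp : 0 < psi0 m r := by unfold psi0; positivity
    have ha : 0 < alphaF m r := by
      unfold alphaF
      have : m / (2*r) < 1 := by rw [div_lt_one (by linarith)]; linarith
      linarith
    have hb : 0 < betaF m n r := by
      unfold betaF
      have h1 : 0 < 3 * m / (r * psi0 m r) := by positivity
      have h2 : 0 < ((n : ℝ) * ((n : ℝ) + 1) / 2 - 1) * psi0 m r := by
        apply mul_pos _ hp
        nlinarith
      linarith
    exact ⟨hr0, hp, ha, hb⟩
  set fI : ℝ → ℝ := fun r : ℝ => ((r * deriv X r - betaF m n r * Y r) ^ 2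
            + 2 * k * alphaF m r * X r * Y r) / (alphaF m r * r ^ 2 * psi0 m r) with hfI
  set fS : ℝ → ℝ := fun r : ℝ => (betaF m n r) ^ 2 / (alphaF m r * r ^ 2 * psi0 m r) *
          (Y r - r / betaF m n r * deriv X r + k * alphaF m r / (betaF m n r) ^ 2 * X r) ^ 2
    with hfS
  set F : ℝ → ℝ := fun r => k * X r ^ 2 / h r with hF
  have hrpB : ∀ r : ℝ, m/2 < r → r * psi0 m r * betaF m n r = h r := by
    intro r hr
    obtain ⟨hr0, hp, ha, hb⟩ := hfacts r hr
    have hpne : (1 : ℝ) + m/(2*r) ≠ 0 := by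
      have : psi0 m r = 1 + m/(2*r) := rfl
      rw [this] at hp; linarith
    have h2rm : 2*r + m ≠ 0 := by positivity
    have := rpB_id m k r (ne_of_gt hr0) hpne h2rm
    simpa [betaF, psi0, hh, hk] using this
  have key : ∀ b : ℝ, m/2 ≤ b →
      (∫ r in (m/2)..b, (fI r - fS r)) = F b - F (m/2) := by
    intro b hb
    apply integral_eq_sub_of_hasDerivAt_of_le hb
    · -- continuity of F on Icc
      apply ContinuousOn.div
      · exact continuousOn_const.mul ((hX.continuousOn.pow 2).mono Icc_subset_Ici_self)
      · refine (continuousOn_const.mul (((continuousOn_id.add continuousOn_const).add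
          (continuousOn_const.div (by fun_prop) ?_)))).add continuousOn_const
        intro x hx
        have : 0 < x := lt_of_lt_of_le hm2 hx.1
        positivity
      · intro x hx
        exact ne_of_gt (hhpos x hx.1)
    · intro r hr
      obtain ⟨hr0, hp, ha, hb'⟩ := hfacts r hr.1
      have hd : HasDerivAt X (deriv X r) r := hasDerivAt_of_cd hX hr.1
      have hrne : r ≠ 0 := ne_of_gt hr0
      have hhd : HasDerivAt h (k * (alphaF m r * psi0 m r)) r := by
        have h1 : HasDerivAt (fun x : ℝ => x + m + m^2/(4*x)) (1 + (m^2/4) * (-(r^2)⁻¹)) r := by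
          have hinv := (hasDerivAt_inv hrne).const_mul (m^2/4)
          have h2 : HasDerivAt (fun x : ℝ => x + m) 1 r := (hasDerivAt_id r).add_const m
          exact (h2.add hinv).congr_of_eventuallyEq (Filter.Eventually.of_forall fun x => by simp only [Pi.add_apply]; ring)
        have h3 := (h1.const_mul k).add_const (3*m)
        refine h3.congr_deriv ?_
        unfold alphaF psi0
        field_simp
        ring
      have hne : h r ≠ 0 := ne_of_gt (hhpos r hr.1.le)
      have hFd : HasDerivAt F ((k * (2 * X r ^ 1 * deriv X r) * h r
          - k * X r ^ 2 * (k * (alphaF m r * psi0 m r))) / (h r) ^ 2) r :=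
        ((hd.pow 2).const_mul k).div hhd hne
      refine hFd.congr_deriv ?_
      rw [← hrpB r hr.1]
      simp only [hfI, hfS, pow_one]
      exact (alg_id k (alphaF m r) (psi0 m r) (betaF m n r) r (X r) (deriv X r) (Y r)
        (ne_of_gt ha) (ne_of_gt hp) hrne (ne_of_gt hb')).symm
    · exact (hIn.1 b).sub (hL.1 b)
  obtain ⟨C, hC⟩ := hXb
  have hC0 : 0 ≤ C := le_trans (abs_nonneg _) (hC (m/2) le_rfl)
  have hF0 : Tendsto F atTop (nhds 0) := by
    apply squeeze_zero' (g := fun b => C^2 / b)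
    · filter_upwards [eventually_ge_atTop (m/2)] with b hb
      have := hhpos b hb
      simp only [hF]
      positivity
    · filter_upwards [eventually_ge_atTop (m/2)] with b hb
      have hb0 : 0 < b := lt_of_lt_of_le hm2 hb
      have habs := hC b hb
      have hsq : X b ^ 2 ≤ C ^ 2 := sq_le_sq' (by linarith [(abs_le.1 habs).1]) (abs_le.1 habs).2
      have h1 : k * X b ^ 2 ≤ k * C ^ 2 := by nlinarith
      have h2 : k * b ≤ h b := by
        have h3 : 0 ≤ k * (m + m^2/(4*b)) := by positivity
        simp only [hh]; nlinarith
      calc F b ≤ k * C^2 / (k * b) := by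
            apply div_le_div₀ (by positivity) h1 (by positivity) h2
        _ = C^2 / b := by field_simp
    · exact Tendsto.div_atTop tendsto_const_nhds tendsto_id
  have hLnn : 0 ≤ L := by
    apply ge_of_tendsto hL.2
    filter_upwards [eventually_ge_atTop (m/2)] with b hb
    apply intervalIntegral.integral_nonneg hb
    intro u hu
    have hu0 : 0 < u := lt_of_lt_of_le hm2 hu.1
    have hp : 0 < psi0 m u := by unfold psi0; positivity
    have ha : 0 ≤ alphaF m u := by
      unfold alphaF
      have : m / (2*u) ≤ 1 := by rw [div_le_one (by linarith)]; linarith [hu.1]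
      linarith
    have hnn : 0 ≤ (betaF m n u) ^ 2 / (alphaF m u * u ^ 2 * psi0 m u) := by positivity
    exact mul_nonneg hnn (sq_nonneg _)
  have tInt : Tendsto (fun b => ∫ r in (m/2)..b, fI r) atTop (nhds (L + (0 - F (m/2)))) := by
    have hsum : Tendsto (fun b => (∫ r in (m/2)..b, fS r) + (F b - F (m/2)))
        atTop (nhds (L + (0 - F (m/2)))) :=
      hL.2.add (hF0.sub_const _)
    refine Tendsto.congr' ?_ hsum
    filter_upwards [eventually_ge_atTop (m/2)] with b hb
    have hkey := key b hb
    rw [intervalIntegral.integral_sub (hIn.1 b) (hL.1 b)] at hkey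
    linarith
  have hInval : In = L + (0 - F (m/2)) := tendsto_nhds_unique hIn.2 tInt
  have hFm2 : F (m/2) = k * X (m/2) ^ 2 / (m * ((n : ℝ) ^ 2 + (n : ℝ) + 1)) := by
    simp only [hF, hh]
    have hmne : m ≠ 0 := ne_of_gt hm
    have e1 : m/2 + m + m^2/(4*(m/2)) = 2*m := by field_simp; ring
    rw [e1]
    have e2 : k * (2*m) + 3*m = m * ((n : ℝ) ^ 2 + (n : ℝ) + 1) := by rw [hk]; ring
    rw [e2]
  rw [hInval, hFm2]
  linarith

/-- Estimate (43):
`(2m/3) I₁ + (m/2) Σ_{n≥2} c_n I_n + (1/2) Σ_{n≥0} X_n(m/2)²/(2n+1)`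
`≥ (1/9) X₁∞² + (1/2) Σ_{n≥0} X_n(m/2)²/((2n+1)(n²+n+1))`. -/
theorem PtildeI_lower_bound (m : ℝ) (hm : 0 < m) (N0 : ℕ) (hN0 : 2 ≤ N0)
    (Xf Yf : ℕ → ℝ → ℝ)
    (hXf : ∀ n : ℕ, n ≤ N0 → ContDiffOn ℝ 1 (Xf n) (Set.Ici (m / 2)))
    (hXbdd : ∀ n : ℕ, n ≤ N0 → ∃ C : ℝ, ∀ r : ℝ, m / 2 ≤ r → |Xf n r| ≤ C)
    (hYf : ∀ n : ℕ, 1 ≤ n → n ≤ N0 → ContinuousOn (Yf n) (Set.Ici (m / 2)))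
    (hY1 : ∀ r : ℝ, Yf 1 r = r ^ 2 * psi0 m r / (3 * m) * deriv (Xf 1) r)
    (X1inf : ℝ) (hX1inf : Filter.Tendsto (Xf 1) Filter.atTop (nhds X1inf))
    (I1 : ℝ)
    (hI1 : ImproperEq (fun r : ℝ => Xf 1 r * Yf 1 r / (r ^ 2 * psi0 m r)) (m / 2) I1)
    (In : ℕ → ℝ)
    (hIn : ∀ n : ℕ, 2 ≤ n → n ≤ N0 →
      ImproperEq
        (fun r : ℝ => ((r * deriv (Xf n) r - betaF m n r * Yf n r) ^ 2
            + 2 * ((n : ℝ) * ((n : ℝ) + 1) / 2 - 1) * alphaF m r * Xf n r * Yf n r)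
          / (alphaF m r * r ^ 2 * psi0 m r))
        (m / 2) (In n))
    (hSq : ∀ n : ℕ, 2 ≤ n → n ≤ N0 → ∃ L : ℝ,
      ImproperEq
        (fun r : ℝ => (betaF m n r) ^ 2 / (alphaF m r * r ^ 2 * psi0 m r) *
          (Yf n r - r / betaF m n r * deriv (Xf n) r
            + ((n : ℝ) * ((n : ℝ) + 1) / 2 - 1) * alphaF m r / (betaF m n r) ^ 2 * Xf n r) ^ 2)
        (m / 2) L) :
    2 * m / 3 * I1 + m / 2 * ∑ n ∈ Finset.Icc 2 N0, cC n * In n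
        + 1 / 2 * ∑ n ∈ Finset.range (N0 + 1), (Xf n (m / 2)) ^ 2 / (2 * (n : ℝ) + 1)
      ≥ 1 / 9 * X1inf ^ 2
        + 1 / 2 * ∑ n ∈ Finset.range (N0 + 1),
            (Xf n (m / 2)) ^ 2 / ((2 * (n : ℝ) + 1) * ((n : ℝ) ^ 2 + (n : ℝ) + 1)) := by
  have hm2 : (0:ℝ) < m/2 := by linarith
  have hmne : m ≠ 0 := ne_of_gt hm
  -- value of I1
  have hI1v : I1 = (X1inf^2 - Xf 1 (m/2)^2)/(6*m) :=
    I1_val m hm (Xf 1) (Yf 1) (hXf 1 (by omega)) hY1 X1inf I1 hX1inf hI1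
  set gA : ℕ → ℝ := fun n => (Xf n (m / 2)) ^ 2 / (2 * (n : ℝ) + 1) with hgA
  set gB : ℕ → ℝ := fun n =>
    (Xf n (m / 2)) ^ 2 / ((2 * (n : ℝ) + 1) * ((n : ℝ) ^ 2 + (n : ℝ) + 1)) with hgB
  have hsplit : ∀ g : ℕ → ℝ,
      ∑ n ∈ Finset.range (N0+1), g n = g 0 + g 1 + ∑ n ∈ Finset.Icc 2 N0, g n := by
    intro g
    rw [Finset.range_eq_Ico,
      ← Finset.sum_Ico_consecutive g (by norm_num : 0 ≤ 2) (by omega : 2 ≤ N0+1)]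
    have e1 : Finset.Ico 2 (N0+1) = Finset.Icc 2 N0 := by
      ext x; simp [Nat.lt_succ_iff]
    have e2 : Finset.Ico 0 2 = ({0, 1} : Finset ℕ) := by decide
    rw [e1, e2, Finset.sum_pair (by norm_num)]
  have per : ∀ n ∈ Finset.Icc 2 N0,
      0 ≤ m/2 * (cC n * In n) + 1/2 * gA n - 1/2 * gB n := by
    intro n hn'
    obtain ⟨h2n, hnN⟩ := Finset.mem_Icc.1 hn'
    obtain ⟨L, hLs⟩ := hSq n h2n hnN
    have hb := In_bound m hm n h2n (Xf n) (Yf n) (hXf n hnN) (hXbdd n hnN)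
      (In n) L (hIn n h2n hnN) hLs
    have hnr : (2:ℝ) ≤ (n:ℝ) := by exact_mod_cast h2n
    have hcpos : 0 < cC n := by
      unfold cC
      apply div_pos (by nlinarith) (by nlinarith)
    set q : ℝ := ((n : ℝ) * ((n : ℝ) + 1) / 2 - 1) * Xf n (m/2) ^ 2
            / (m * ((n : ℝ) ^ 2 + (n : ℝ) + 1)) with hq
    have hmul : m/2 * cC n * (-q) ≤ m/2 * cC n * In n :=
      mul_le_mul_of_nonneg_left hb (by positivity)
    have h2 : m/2 * cC n * (-q) = -(1/2 * gA n - 1/2 * gB n) := by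
      simp only [hq, hgA, hgB]
      unfold cC
      have hd1 : (n:ℝ) - 1 ≠ 0 := by nlinarith
      have hd2 : (n:ℝ) + 2 ≠ 0 := by nlinarith
      have hd3 : 2*(n:ℝ) + 1 ≠ 0 := by nlinarith
      have hd4 : (n:ℝ)^2 + (n:ℝ) + 1 ≠ 0 := by nlinarith
      field_simp
      ring
    have h3 : m/2 * (cC n * In n) = m/2 * cC n * In n := by ring
    linarith
  rw [ge_iff_le, hsplit gA, hsplit gB]
  have hsum0 : 0 ≤ ∑ n ∈ Finset.Icc 2 N0, (m/2 * (cC n * In n) + 1/2 * gA n - 1/2 * gB n) :=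
    Finset.sum_nonneg per
  have hdist : ∑ n ∈ Finset.Icc 2 N0, (m/2 * (cC n * In n) + 1/2 * gA n - 1/2 * gB n)
      = m/2 * ∑ n ∈ Finset.Icc 2 N0, (cC n * In n)
        + 1/2 * ∑ n ∈ Finset.Icc 2 N0, gA n - 1/2 * ∑ n ∈ Finset.Icc 2 N0, gB n := by
    rw [Finset.sum_sub_distrib, Finset.sum_add_distrib, Finset.mul_sum, Finset.mul_sum,
      Finset.mul_sum]
  have e3 : 2*m/3*I1 = X1inf^2/9 - Xf 1 (m/2)^2/9 := by rw [hI1v]; field_simp; ring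
  have hAB0 : gA 0 = gB 0 := by simp [hgA, hgB]
  have hA1 : gA 1 = Xf 1 (m/2)^2/3 := by simp [hgA]; norm_num
  have hB1 : gB 1 = Xf 1 (m/2)^2/9 := by simp [hgB]; norm_num
  linarith
end

section
/- Fix $m>0$, $J\in\mathbb{R}$, and an integer $N_0 \ge 2$. Let $f:[m/2,\infty)\to\mathbb{R}$ be $C^1$; for $0 \le n \le N_0$ let $X_n:[m/2,\infty)\to\mathbb{R}$ be $C^1$ and bounded, and for $1 \le n \le N_0$ let $Y_n:[m/2,\infty)\to\mathbb{R}$ be continuous. Assume: (i) $Y_1(r) = \frac{r^2\psi_0(r)}{3m} X_1'(r)$ and $X_{1\infty} = \lim_{r\to\infty} X_1(r)$ exists; (ii) for each $2 \le n \le N_0$, with $N_n = \frac{n(n+1)}{2}$, the improper integrals $I_n = \int_{m/2}^{\infty}\big[(r X_n' - \beta_n Y_n)^2 + 2(N_n-1)\alpha X_n Y_n\big]\frac{dr}{\alpha r^2 \psi_0}$ and $\int_{m/2}^{\infty}\frac{\beta_n^2}{\alpha r^2\psi_0}\big(Y_n - \frac{r}{\beta_n}X_n' + \frac{(N_n-1)\alpha}{\beta_n^2}X_n\big)^2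 dr$ converge; (iii) the improper integral $P_J = 2\int_{m/2}^{\infty}\frac{m\alpha(r)}{4 r^2 \psi_0(r)^7}\int_{-1}^{1}\big[f'(r)^2(1-z^2)^2 + \frac{(1-z^2)(4f(r)z+3J)^2}{r^2}\big]dz\,dr$ converges. Then, with $I_1 = \int_{m/2}^{\infty}\frac{X_1 Y_1}{r^2\psi_0}dr$ and $c_n = \frac{2n(n+1)}{(n-1)(n+2)(2n+1)}$: $X_0(m/2)^2 - \frac32\sum_{n=0}^{N_0}\frac{X_n(m/2)^2}{(2n+1)^3} + P_J + \frac{2m}{3} I_1 + \frac{m}{2}\sum_{n=2}^{N_0} c_n I_n + \frac12\sum_{n=0}^{N_0}\frac{X_n(m/2)^2}{2n+1} \;\ge\; \frac{J^2}{4m^2} + \frac19 X_{1\infty}^2 + \sum_{n=2}^{N_0}\frac{(n-1)(n+2)\, X_n(m/2)^2}{2\,(n^2+n+1)\,(2n+1)^3}$. -/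
section PenroseAux

lemma pen_r_pos {m r : ℝ} (hm : 0 < m) (hr : m / 2 ≤ r) : 0 < r :=
  lt_of_lt_of_le (by linarith) hr

lemma pen_psi0_pos {m r : ℝ} (hm : 0 < m) (hr : m / 2 ≤ r) : 0 < psi0 m r := by
  have h := pen_r_pos hm hr
  have : 0 < m / (2 * r) := by positivity
  unfold psi0; linarith

lemma pen_psi0_ge_one {m r : ℝ} (hm : 0 < m) (hr : m / 2 ≤ r) : 1 ≤ psi0 m r := by
  have h := pen_r_pos hm hr
  have : 0 < m / (2 * r) := by positivity
  unfold psi0; linarith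

lemma pen_alphaF_nonneg {m r : ℝ} (hm : 0 < m) (hr : m / 2 ≤ r) : 0 ≤ alphaF m r := by
  have h := pen_r_pos hm hr
  have : m / (2 * r) ≤ 1 := by rw [div_le_one (by linarith)]; linarith
  unfold alphaF; linarith

lemma pen_psi0_at_a {m : ℝ} (hm : 0 < m) : psi0 m (m / 2) = 2 := by
  unfold psi0; field_simp; ring

lemma pen_hasDerivAt_psi0 {m r : ℝ} (hr : r ≠ 0) :
    HasDerivAt (psi0 m) (-(m / 2) / r ^ 2) r := by
  have h1 : HasDerivAt (fun x : ℝ => x⁻¹) (-(r ^ 2)⁻¹) r := hasDerivAt_inv hr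
  have h2 : HasDerivAt (fun x : ℝ => 1 + m / 2 * x⁻¹) (m / 2 * -(r ^ 2)⁻¹) r :=
    (h1.const_mul (m / 2)).const_add 1
  have he : (fun x : ℝ => 1 + m / 2 * x⁻¹) = psi0 m := by
    funext x; unfold psi0; ring
  rw [he] at h2
  convert h2 using 1
  field_simp

lemma pen_hasDerivAt_of_contDiffOn {X : ℝ → ℝ} {a r : ℝ}
    (hX : ContDiffOn ℝ 1 X (Set.Ici a)) (hr : a < r) : HasDerivAt X (deriv X r) r := by
  have h1 : Set.Ici a ∈ nhds r := Ici_mem_nhds hr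
  exact ((hX.contDiffAt h1).differentiableAt one_ne_zero).hasDerivAt

lemma pen_contOn_psi0 {m : ℝ} {s : Set ℝ} (hs : (0:ℝ) ∉ s) : ContinuousOn (psi0 m) s := by
  unfold psi0
  exact continuousOn_const.add (continuousOn_const.div
    (continuous_const.mul continuous_id).continuousOn
    (fun x hx h0 => hs (by
      have hx0 : x = 0 := by
        have h2 : (2:ℝ) * x = 0 := h0
        linarith
      rwa [hx0] at hx)))

lemma pen_contOn_alphaF {m : ℝ} {s : Set ℝ} (hs : (0:ℝ) ∉ s) : ContinuousOn (alphaF m) s := by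
  unfold alphaF
  exact continuousOn_const.sub (continuousOn_const.div
    (continuous_const.mul continuous_id).continuousOn
    (fun x hx h0 => hs (by
      have hx0 : x = 0 := by
        have h2 : (2:ℝ) * x = 0 := h0
        linarith
      rwa [hx0] at hx)))

lemma pen_I1_val (m : ℝ) (hm : 0 < m) (X : ℝ → ℝ) (hX : ContDiffOn ℝ 1 X (Set.Ici (m/2)))
    (Y : ℝ → ℝ) (hY : ∀ r, Y r = r^2 * psi0 m r / (3*m) * deriv X r)
    (X1inf I1 : ℝ) (hX1inf : Filter.Tendsto X Filter.atTop (nhds X1inf))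
    (hI1 : ImproperEq (fun r => X r * Y r / (r^2 * psi0 m r)) (m/2) I1) :
    I1 = (X1inf^2 - (X (m/2))^2) / (6*m) := by
  set a := m / 2 with ha
  have key : ∀ b : ℝ, a ≤ b →
      (∫ r in a..b, X r * Y r / (r^2 * psi0 m r))
        = (X b)^2/(6*m) - (X a)^2/(6*m) := by
    intro b hab
    apply intervalIntegral.integral_eq_sub_of_hasDeriv_right_of_le hab
    · exact ((hX.continuousOn.mono (Set.Icc_subset_Ici_self)).pow 2).div_const _
    · intro x hx
      have hxa : a < x := hx.1
      have hx0 : (0:ℝ) < x := pen_r_pos hm hxa.le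
      have hps : (0:ℝ) < psi0 m x := pen_psi0_pos hm hxa.le
      have hd := pen_hasDerivAt_of_contDiffOn hX hxa
      have h2 : HasDerivAt (fun r => (X r)^2/(6*m))
          ((2 * X x ^ 1 * deriv X x)/(6*m)) x := (hd.pow 2).div_const _
      have h3 : (2 * X x ^ 1 * deriv X x)/(6*m) = X x * Y x / (x^2 * psi0 m x) := by
        rw [hY x]; field_simp; ring
      rw [h3] at h2
      exact h2.hasDerivWithinAt
    · exact hI1.1 b
  have h4 : Filter.Tendsto (fun b => (X b)^2/(6*m) - (X a)^2/(6*m)) Filter.atTop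
      (nhds ((X1inf^2 - (X a)^2) / (6*m))) := by
    have := ((hX1inf.pow 2).div_const (6*m)).sub_const ((X a)^2/(6*m))
    convert this using 2; ring
  have h5 : Filter.Tendsto (fun b => ∫ r in a..b, X r * Y r / (r^2 * psi0 m r))
      Filter.atTop (nhds ((X1inf^2 - (X a)^2) / (6*m))) := by
    apply h4.congr'
    filter_upwards [Filter.eventually_ge_atTop a] with b hb
    exact (key b hb).symm
  exact tendsto_nhds_unique hI1.2 h5

lemma pen_poly_int (c1 c2 c3 c4 c5 : ℝ) :
    ∫ z in (-1:ℝ)..1, (c1 + c2*z + c3*z^2 + c4*z^3 + c5*z^4)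
      = 2*c1 + 2*c3/3 + 2*c5/5 := by
  have h : ∀ z : ℝ, HasDerivAt
      (fun z => c1*z + c2*z^2/2 + c3*z^3/3 + c4*z^4/4 + c5*z^5/5)
      (c1 + c2*z + c3*z^2 + c4*z^3 + c5*z^4) z := by
    intro z
    have h1 := (hasDerivAt_id z).const_mul c1
    have h2 := ((hasDerivAt_pow 2 z).const_mul c2).div_const 2
    have h3 := ((hasDerivAt_pow 3 z).const_mul c3).div_const 3
    have h4 := ((hasDerivAt_pow 4 z).const_mul c4).div_const 4
    have h5 := ((hasDerivAt_pow 5 z).const_mul c5).div_const 5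
    refine HasDerivAt.congr_deriv ((((h1.add h2).add h3).add h4).add h5) ?_
    push_cast; ring
  rw [intervalIntegral.integral_eq_sub_of_hasDerivAt (fun x _ => h x)
    (by apply Continuous.intervalIntegrable; continuity)]
  ring

lemma pen_inner_int (A B J r : ℝ) :
    ∫ z in (-1:ℝ)..1, (A * (1 - z^2)^2 + (1 - z^2)*(4*B*z + 3*J)^2 / r^2)
      = 16*A/15 + (64*B^2/15 + 12*J^2)/r^2 := by
  have he : (fun z : ℝ => A * (1 - z^2)^2 + (1 - z^2)*(4*B*z + 3*J)^2 / r^2)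
      = fun z : ℝ => ((A + 9*J^2/r^2) + (24*B*J/r^2)*z + (-2*A + (16*B^2-9*J^2)/r^2)*z^2
        + (-24*B*J/r^2)*z^3 + (A - 16*B^2/r^2)*z^4) := by
    funext z; ring
  rw [he, pen_poly_int]; ring

lemma pen_PJ_lb (m J : ℝ) (hm : 0 < m) (f : ℝ → ℝ) (PJ : ℝ)
    (hPJ : ImproperEq
      (fun r : ℝ => 2 * (m * alphaF m r / (4 * r ^ 2 * (psi0 m r) ^ 7)) *
        ∫ z in (-1 : ℝ)..1,
          ((deriv f r) ^ 2 * (1 - z ^ 2) ^ 2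
            + (1 - z ^ 2) * (4 * f r * z + 3 * J) ^ 2 / r ^ 2))
      (m / 2) PJ) :
    J^2/(4*m^2) ≤ PJ := by
  set a := m / 2 with ha
  set g : ℝ → ℝ := fun r : ℝ => 2 * (m * alphaF m r / (4 * r ^ 2 * (psi0 m r) ^ 7)) *
        ∫ z in (-1 : ℝ)..1,
          ((deriv f r) ^ 2 * (1 - z ^ 2) ^ 2
            + (1 - z ^ 2) * (4 * f r * z + 3 * J) ^ 2 / r ^ 2) with hg
  set h : ℝ → ℝ := fun r => 6*J^2*m*alphaF m r/(r^4 * (psi0 m r)^7) with hh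
  set F : ℝ → ℝ := fun r => -(48*J^2/m^2) *
    ((psi0 m r)⁻¹^3/3 - (psi0 m r)⁻¹^4 + (psi0 m r)⁻¹^5 - (psi0 m r)⁻¹^6/3) with hF
  have hgh : ∀ r : ℝ, a ≤ r → h r ≤ g r := by
    intro r hr
    have h0 : (0:ℝ) < r := pen_r_pos hm hr
    have hps : (0:ℝ) < psi0 m r := pen_psi0_pos hm hr
    have hal : (0:ℝ) ≤ alphaF m r := pen_alphaF_nonneg hm hr
    have hgr : g r = 2 * (m * alphaF m r / (4 * r ^ 2 * (psi0 m r) ^ 7)) *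
        (16*(deriv f r)^2/15 + (64*(f r)^2/15 + 12*J^2)/r^2) := by
      rw [hg]; simp only []; rw [pen_inner_int]
    rw [hgr]
    have hc : (0:ℝ) ≤ m * alphaF m r / (4 * r ^ 2 * (psi0 m r) ^ 7) := by positivity
    have h12 : h r = 2 * (m * alphaF m r / (4 * r ^ 2 * (psi0 m r) ^ 7)) * (12*J^2/r^2) := by
      show 6*J^2*m*alphaF m r/(r^4 * (psi0 m r)^7) = _
      field_simp; ring
    rw [h12]
    apply mul_le_mul_of_nonneg_left _ (by positivity)
    have : (0:ℝ) ≤ 16*(deriv f r)^2/15 + 64*(f r)^2/15/r^2 := by positivity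
    have he : (16*(deriv f r)^2/15 + (64*(f r)^2/15 + 12*J^2)/r^2)
        = (16*(deriv f r)^2/15 + 64*(f r)^2/15/r^2) + 12*J^2/r^2 := by ring
    rw [he]; linarith
  have hFd : ∀ r : ℝ, a < r → HasDerivAt F (h r) r := by
    intro r hr
    have h0 : (0:ℝ) < r := pen_r_pos hm hr.le
    have hps : (0:ℝ) < psi0 m r := pen_psi0_pos hm hr.le
    have hpd := pen_hasDerivAt_psi0 (m := m) h0.ne'
    have hw : HasDerivAt (fun x => (psi0 m x)⁻¹) (-((psi0 m r)^2)⁻¹ * (-(m / 2) / r ^ 2)) r :=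
      (hasDerivAt_inv hps.ne').comp r hpd
    set dw := -((psi0 m r)^2)⁻¹ * (-(m / 2) / r ^ 2) with hdw
    set w := fun x => (psi0 m x)⁻¹ with hwdef
    have h3 := ((hw.pow 3).div_const 3)
    have h4 := (hw.pow 4)
    have h5 := (hw.pow 5)
    have h6 := ((hw.pow 6).div_const 3)
    have hsum := ((((h3.sub h4).add h5).sub h6).const_mul (-(48*J^2/m^2)))
    have hFeq : HasDerivAt F (-(48*J^2/m^2) * ((3 * w r ^ 2 * dw)/3
        - 4 * w r ^ 3 * dw + 5 * w r ^ 4 * dw - (6 * w r ^ 5 * dw)/3)) r := by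
      refine HasDerivAt.congr_deriv hsum ?_
      push_cast; ring
    convert hFeq using 1
    rw [hh, hwdef, hdw]
    simp only [psi0, alphaF]
    have hne : (1 + m / (2*r)) ≠ 0 := by
      have : psi0 m r = 1 + m/(2*r) := rfl
      rw [← this]; exact hps.ne'
    field_simp
    ring
  have hint : ∀ b : ℝ, a ≤ b → (∫ r in a..b, h r) = F b - F a := by
    intro b hab
    apply intervalIntegral.integral_eq_sub_of_hasDeriv_right_of_le hab
    · have h0 : (0:ℝ) ∉ Set.Icc a b := by
        intro hc; have := hc.1; simp only [ha] at this; linarith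
      have hpsc : ContinuousOn (psi0 m) (Set.Icc a b) := pen_contOn_psi0 h0
      have hpsne : ∀ x ∈ Set.Icc a b, psi0 m x ≠ 0 :=
        fun x hx => (pen_psi0_pos hm hx.1).ne'
      have hwc : ContinuousOn (fun x => (psi0 m x)⁻¹) (Set.Icc a b) := hpsc.inv₀ hpsne
      exact (((((hwc.pow 3).div_const 3).sub (hwc.pow 4)).add (hwc.pow 5)).sub
        ((hwc.pow 6).div_const 3)).const_smul (-(48*J^2/m^2)) |>.congr (by
          intro x hx; simp [hF, smul_eq_mul])
    · exact fun x hx => (hFd x hx.1).hasDerivWithinAt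
    · apply ContinuousOn.intervalIntegrable
      have h0 : (0:ℝ) ∉ Set.uIcc a b := by
        rw [Set.uIcc_of_le hab]
        intro hc; have := hc.1; simp only [ha] at this; linarith
      have hpsc : ContinuousOn (psi0 m) (Set.uIcc a b) := pen_contOn_psi0 h0
      have halc : ContinuousOn (alphaF m) (Set.uIcc a b) := pen_contOn_alphaF h0
      apply ContinuousOn.div
      · exact (continuousOn_const.mul halc)
      · exact ((continuousOn_id.pow 4).mul (hpsc.pow 7))
      · intro x hx
        have hx0 : x ≠ 0 := fun hc => h0 (hc ▸ hx)
        have : psi0 m x ≠ 0 := by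
          rcases Set.mem_uIcc.mp hx with h | h
          · exact (pen_psi0_pos hm (by rw [Set.uIcc_of_le hab] at hx; exact hx.1)).ne'
          · exact (pen_psi0_pos hm (by rw [Set.uIcc_of_le hab] at hx; exact hx.1)).ne'
        positivity
  have hFa : F a = -(J^2/(4*m^2)) := by
    rw [hF]; simp only [ha, pen_psi0_at_a hm]; norm_num; ring_nf
  have hpsi_lim : Filter.Tendsto (fun b => psi0 m b) Filter.atTop (nhds 1) := by
    have : (fun b : ℝ => psi0 m b) = fun b => 1 + (m/2)/b := by
      funext b; unfold psi0; rw [div_div]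
    rw [this]
    have := Filter.Tendsto.div_atTop (tendsto_const_nhds (x := (m/2))) Filter.tendsto_id
    simpa using (tendsto_const_nhds (x := (1:ℝ))).add this
  have hFlim : Filter.Tendsto F Filter.atTop (nhds 0) := by
    have hcont : ContinuousAt (fun t : ℝ => -(48*J^2/m^2) *
        (t⁻¹^3/3 - t⁻¹^4 + t⁻¹^5 - t⁻¹^6/3)) 1 := by
      fun_prop (disch := norm_num)
    have := (hcont.tendsto).comp hpsi_lim
    have hval : (-(48*J^2/m^2) * ((1:ℝ)⁻¹^3/3 - (1:ℝ)⁻¹^4 + (1:ℝ)⁻¹^5 - (1:ℝ)⁻¹^6/3)) = 0 := by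
      norm_num
    rw [hval] at this
    exact this.congr (fun b => by simp [hF])
  have hlim_h : Filter.Tendsto (fun b => ∫ r in a..b, h r) Filter.atTop
      (nhds (J^2/(4*m^2))) := by
    have h2 : Filter.Tendsto (fun b => F b - F a) Filter.atTop (nhds (J^2/(4*m^2))) := by
      have := hFlim.sub_const (F a)
      convert this using 2
      rw [hFa]; ring
    apply h2.congr'
    filter_upwards [Filter.eventually_ge_atTop a] with b hb
    exact (hint b hb).symm
  apply le_of_tendsto_of_tendsto hlim_h hPJ.2
  filter_upwards [Filter.eventually_ge_atTop a] with b hb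
  apply intervalIntegral.integral_mono_on hb _ (hPJ.1 b) (fun x hx => hgh x hx.1)
  · apply ContinuousOn.intervalIntegrable
    have h0 : (0:ℝ) ∉ Set.uIcc a b := by
      rw [Set.uIcc_of_le hb]
      intro hc; have := hc.1; simp only [ha] at this; linarith
    have hpsc : ContinuousOn (psi0 m) (Set.uIcc a b) := pen_contOn_psi0 h0
    have halc : ContinuousOn (alphaF m) (Set.uIcc a b) := pen_contOn_alphaF h0
    apply ContinuousOn.div
    · exact (continuousOn_const.mul halc)
    · exact ((continuousOn_id.pow 4).mul (hpsc.pow 7))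
    · intro x hx
      have hx0 : x ≠ 0 := fun hc => h0 (hc ▸ hx)
      have : psi0 m x ≠ 0 :=
        (pen_psi0_pos hm (by rw [Set.uIcc_of_le hb] at hx; exact hx.1)).ne'
      positivity

lemma pen_key_alg (ν r ψ α β X X' Y : ℝ) (hr : r ≠ 0) (hψ : ψ ≠ 0) (hα : α ≠ 0)
    (hβ : β ≠ 0) :
    (ν*(2*X*X') * (β*r*ψ) - ν*X^2*(ν*α*ψ)) / (β*r*ψ)^2
      = ((r*X' - β*Y)^2 + 2*ν*α*X*Y)/(α*r^2*ψ)
        - β^2/(α*r^2*ψ)*(Y - r/β*X' + ν*α/β^2*X)^2 := by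
  field_simp
  ring

lemma pen_In_lb (m : ℝ) (hm : 0 < m) (n : ℕ) (hn : 2 ≤ n) (X Y : ℝ → ℝ)
    (hX : ContDiffOn ℝ 1 X (Set.Ici (m/2))) (hC : ∃ C : ℝ, ∀ r : ℝ, m/2 ≤ r → |X r| ≤ C)
    (I L : ℝ)
    (hI : ImproperEq
        (fun r : ℝ => ((r * deriv X r - betaF m n r * Y r) ^ 2
            + 2 * ((n : ℝ) * ((n : ℝ) + 1) / 2 - 1) * alphaF m r * X r * Y r)
          / (alphaF m r * r ^ 2 * psi0 m r)) (m/2) I)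
    (hL : ImproperEq
        (fun r : ℝ => (betaF m n r) ^ 2 / (alphaF m r * r ^ 2 * psi0 m r) *
          (Y r - r / betaF m n r * deriv X r
            + ((n : ℝ) * ((n : ℝ) + 1) / 2 - 1) * alphaF m r / (betaF m n r) ^ 2 * X r) ^ 2)
        (m/2) L) :
    -(((n : ℝ) * ((n : ℝ) + 1) / 2 - 1) * (X (m/2))^2
        / ((2*((n : ℝ) * ((n : ℝ) + 1) / 2 - 1)+3)*m)) ≤ I := by
  set a := m / 2 with ha
  set ν : ℝ := (n : ℝ) * ((n : ℝ) + 1) / 2 - 1 with hν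
  have hn2 : (2:ℝ) ≤ (n:ℝ) := by exact_mod_cast hn
  have hνpos : (2:ℝ) ≤ ν := by rw [hν]; nlinarith
  set g : ℝ → ℝ := fun r : ℝ => ((r * deriv X r - betaF m n r * Y r) ^ 2
            + 2 * ν * alphaF m r * X r * Y r)
          / (alphaF m r * r ^ 2 * psi0 m r) with hg
  set S : ℝ → ℝ := fun r : ℝ => (betaF m n r) ^ 2 / (alphaF m r * r ^ 2 * psi0 m r) *
          (Y r - r / betaF m n r * deriv X r + ν * alphaF m r / (betaF m n r) ^ 2 * X r) ^ 2
    with hS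
  set D : ℝ → ℝ := fun r => ν * r * (psi0 m r)^2 + 3*m with hD
  set B : ℝ → ℝ := fun r => ν * (X r)^2 / D r with hB
  have hDpos : ∀ r : ℝ, a ≤ r → 0 < D r := by
    intro r hr
    have h0 := pen_r_pos hm hr
    have hps := pen_psi0_pos hm hr
    rw [hD]; positivity
  have hDbeta : ∀ r : ℝ, a ≤ r → D r = betaF m n r * r * psi0 m r := by
    intro r hr
    have h0 := pen_r_pos hm hr
    have hps := pen_psi0_pos hm hr
    rw [hD]
    simp only [betaF, ← hν]
    have hps' : psi0 m r ≠ 0 := hps.ne'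
    field_simp
  have hbeta_pos : ∀ r : ℝ, a ≤ r → 0 < betaF m n r := by
    intro r hr
    have h0 := pen_r_pos hm hr
    have hps := pen_psi0_pos hm hr
    have := hDpos r hr
    rw [hDbeta r hr] at this
    nlinarith [mul_pos h0 hps]
  have key : ∀ b : ℝ, a ≤ b → (∫ r in a..b, (g r - S r)) = B b - B a := by
    intro b hab
    apply intervalIntegral.integral_eq_sub_of_hasDeriv_right_of_le hab
    · have h0 : (0:ℝ) ∉ Set.Icc a b := fun hc => by
        have := hc.1; simp only [ha] at this; linarith
      have hXc : ContinuousOn X (Set.Icc a b) :=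
        hX.continuousOn.mono (Set.Icc_subset_Ici_self)
      have hDc : ContinuousOn D (Set.Icc a b) := by
        rw [hD]
        exact ((continuousOn_const.mul continuousOn_id).mul
          ((pen_contOn_psi0 h0).pow 2)).add continuousOn_const
      exact ((hXc.pow 2).const_smul ν).div hDc (fun x hx => (hDpos x hx.1).ne') |>.congr
        (fun x hx => by simp [hB, smul_eq_mul])
    · intro x hx
      have hxa : a < x := hx.1
      have h0 : (0:ℝ) < x := pen_r_pos hm hxa.le
      have hps : (0:ℝ) < psi0 m x := pen_psi0_pos hm hxa.le
      have hal : (0:ℝ) < alphaF m x := by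
        have : m / (2 * x) < 1 := by
          rw [div_lt_one (by linarith)]; simp only [ha] at hxa; linarith
        unfold alphaF; linarith
      have hβ : (0:ℝ) < betaF m n x := hbeta_pos x hxa.le
      have hXd := pen_hasDerivAt_of_contDiffOn hX hxa
      have hψd := pen_hasDerivAt_psi0 (m := m) h0.ne'
      have hDd : HasDerivAt D (ν * alphaF m x * psi0 m x) x := by
        have h1 : HasDerivAt (fun r : ℝ => ν * r) ν x := by
          simpa using (hasDerivAt_id x).const_mul ν
        have h2 := (hψd.pow 2)
        have h3 := ((h1.mul h2).add_const (3*m))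
        have he : (fun r => ν * r * (psi0 m r)^2 + 3*m) = D := by rw [hD]
        change HasDerivAt (fun r => ν * r * (psi0 m r)^2 + 3*m) _ x at h3
        rw [he] at h3
        convert h3 using 1
        simp only [alphaF, psi0, Pi.pow_apply]
        field_simp
        ring_nf
        field_simp
        ring
      have hBd : HasDerivAt B ((ν * (2 * X x ^ 1 * deriv X x) * D x
          - ν * (X x)^2 * (ν * alphaF m x * psi0 m x)) / (D x)^2) x := by
        have h1 := (hXd.pow 2).const_mul ν
        exact h1.div hDd (hDpos x hxa.le).ne'
      have hval : (ν * (2 * X x ^ 1 * deriv X x) * D x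
          - ν * (X x)^2 * (ν * alphaF m x * psi0 m x)) / (D x)^2 = g x - S x := by
        rw [hDbeta x hxa.le]
        have := pen_key_alg ν x (psi0 m x) (alphaF m x) (betaF m n x) (X x) (deriv X x) (Y x)
          h0.ne' hps.ne' hal.ne' hβ.ne'
        rw [hg, hS]
        simp only []
        rw [← this]
        ring
      rw [hval] at hBd
      exact hBd.hasDerivWithinAt
    · exact (hI.1 b).sub (hL.1 b)
  have hSnn : ∀ r : ℝ, a ≤ r → 0 ≤ S r := by
    intro r hr
    have h0 := pen_r_pos hm hr
    have hps := pen_psi0_pos hm hr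
    have hal := pen_alphaF_nonneg hm hr
    rw [hS]
    have : (0:ℝ) ≤ (betaF m n r) ^ 2 / (alphaF m r * r ^ 2 * psi0 m r) := by positivity
    exact mul_nonneg this (sq_nonneg _)
  have hLnn : 0 ≤ L := by
    apply ge_of_tendsto hL.2
    filter_upwards [Filter.eventually_ge_atTop a] with b hb
    exact intervalIntegral.integral_nonneg hb (fun x hx => hSnn x hx.1)
  obtain ⟨C, hCb⟩ := hC
  have hC0 : 0 ≤ C := le_trans (abs_nonneg _) (hCb a le_rfl)
  have hB0 : Filter.Tendsto B Filter.atTop (nhds 0) := by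
    apply squeeze_zero' (g := fun b => C^2 / b)
    · filter_upwards [Filter.eventually_ge_atTop a] with b hb
      have := hDpos b hb
      rw [hB]
      positivity
    · filter_upwards [Filter.eventually_ge_atTop a] with b hb
      have h0 := pen_r_pos hm hb
      have hps1 := pen_psi0_ge_one hm hb
      have hDb : ν * b ≤ D b := by
        show ν * b ≤ ν * b * (psi0 m b)^2 + 3*m
        have h1 : ν * b * 1 ≤ ν * b * (psi0 m b)^2 := by
          apply mul_le_mul_of_nonneg_left _ (by positivity)
          nlinarith
        nlinarith
      have hXb : (X b)^2 ≤ C^2 := by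
        have := hCb b hb
        nlinarith [abs_nonneg (X b), sq_abs (X b)]
      rw [hB]
      have hνb : (0:ℝ) < ν * b := by positivity
      calc ν * (X b)^2 / D b ≤ ν * C^2 / (ν * b) := by
            apply div_le_div₀ (by positivity) (by nlinarith) hνb hDb
        _ = C^2 / b := by field_simp
    · exact Filter.Tendsto.div_atTop tendsto_const_nhds Filter.tendsto_id
  have hIval : I = L - B a := by
    have h1 : Filter.Tendsto (fun b => (∫ r in a..b, S r) + B b - B a) Filter.atTop
        (nhds (L + 0 - B a)) := (hL.2.add hB0).sub_const (B a)
    have h2 : Filter.Tendsto (fun b => ∫ r in a..b, g r) Filter.atTop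
        (nhds (L + 0 - B a)) := by
      apply h1.congr'
      filter_upwards [Filter.eventually_ge_atTop a] with b hb
      have h3 : (∫ r in a..b, (g r - S r)) = (∫ r in a..b, g r) - ∫ r in a..b, S r :=
        intervalIntegral.integral_sub (hI.1 b) (hL.1 b)
      have := key b hb
      rw [h3] at this
      linarith
    have := tendsto_nhds_unique hI.2 h2
    rw [this]; ring
  have hBa : B a = ν * (X a)^2 / ((2*ν+3)*m) := by
    have hDa : D a = (2*ν+3)*m := by
      show ν * a * (psi0 m a)^2 + 3*m = _
      simp only [ha, pen_psi0_at_a hm]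
      ring
    show ν * (X a)^2 / D a = _
    rw [hDa]
  rw [hIval, hBa]
  linarith

end PenroseAux

/-- The analytic core of the main theorem: the perturbative Penrose functional,
expressed through Legendre modes and the angular-momentum contribution `P_J`,
dominates the momentum, angular-momentum and positive remainder terms (eq. (53a)). -/
theorem penrose_core_inequality (m : ℝ) (hm : 0 < m) (J : ℝ) (N0 : ℕ) (hN0 : 2 ≤ N0)
    (f : ℝ → ℝ) (hf : ContDiffOn ℝ 1 f (Set.Ici (m / 2)))
    (Xf Yf : ℕ → ℝ → ℝ)
    (hXf : ∀ n : ℕ, n ≤ N0 → ContDiffOn ℝ 1 (Xf n) (Set.Ici (m / 2)))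
    (hXbdd : ∀ n : ℕ, n ≤ N0 → ∃ C : ℝ, ∀ r : ℝ, m / 2 ≤ r → |Xf n r| ≤ C)
    (hYf : ∀ n : ℕ, 1 ≤ n → n ≤ N0 → ContinuousOn (Yf n) (Set.Ici (m / 2)))
    (hY1 : ∀ r : ℝ, Yf 1 r = r ^ 2 * psi0 m r / (3 * m) * deriv (Xf 1) r)
    (X1inf : ℝ) (hX1inf : Filter.Tendsto (Xf 1) Filter.atTop (nhds X1inf))
    (In : ℕ → ℝ)
    (hIn : ∀ n : ℕ, 2 ≤ n → n ≤ N0 →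
      ImproperEq
        (fun r : ℝ => ((r * deriv (Xf n) r - betaF m n r * Yf n r) ^ 2
            + 2 * ((n : ℝ) * ((n : ℝ) + 1) / 2 - 1) * alphaF m r * Xf n r * Yf n r)
          / (alphaF m r * r ^ 2 * psi0 m r))
        (m / 2) (In n))
    (hSq : ∀ n : ℕ, 2 ≤ n → n ≤ N0 → ∃ L : ℝ,
      ImproperEq
        (fun r : ℝ => (betaF m n r) ^ 2 / (alphaF m r * r ^ 2 * psi0 m r) *
          (Yf n r - r / betaF m n r * deriv (Xf n) r
            + ((n : ℝ) * ((n : ℝ) + 1) / 2 - 1) * alphaF m r / (betaF m n r) ^ 2 * Xf n r) ^ 2)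
        (m / 2) L)
    (PJ : ℝ)
    (hPJ : ImproperEq
      (fun r : ℝ => 2 * (m * alphaF m r / (4 * r ^ 2 * (psi0 m r) ^ 7)) *
        ∫ z in (-1 : ℝ)..1,
          ((deriv f r) ^ 2 * (1 - z ^ 2) ^ 2
            + (1 - z ^ 2) * (4 * f r * z + 3 * J) ^ 2 / r ^ 2))
      (m / 2) PJ)
    (I1 : ℝ)
    (hI1 : ImproperEq (fun r : ℝ => Xf 1 r * Yf 1 r / (r ^ 2 * psi0 m r)) (m / 2) I1) :
    (Xf 0 (m / 2)) ^ 2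
        - 3 / 2 * ∑ n ∈ Finset.range (N0 + 1), (Xf n (m / 2)) ^ 2 / (2 * (n : ℝ) + 1) ^ 3
        + PJ + 2 * m / 3 * I1 + m / 2 * ∑ n ∈ Finset.Icc 2 N0, cC n * In n
        + 1 / 2 * ∑ n ∈ Finset.range (N0 + 1), (Xf n (m / 2)) ^ 2 / (2 * (n : ℝ) + 1)
      ≥ J ^ 2 / (4 * m ^ 2) + 1 / 9 * X1inf ^ 2
        + ∑ n ∈ Finset.Icc 2 N0,
            (((n : ℝ) - 1) * ((n : ℝ) + 2) * (Xf n (m / 2)) ^ 2) /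
              (2 * ((n : ℝ) ^ 2 + (n : ℝ) + 1) * (2 * (n : ℝ) + 1) ^ 3) := by
  have hm' : m ≠ 0 := hm.ne'
  -- I1 value
  have hI1val : I1 = (X1inf^2 - (Xf 1 (m/2))^2)/(6*m) := by
    apply pen_I1_val m hm (Xf 1) (hXf 1 (by omega)) (Yf 1) hY1 X1inf I1 hX1inf
    exact hI1
  have he1 : 2 * m / 3 * I1 = (X1inf^2 - (Xf 1 (m/2))^2)/9 := by
    rw [hI1val]; field_simp; ring
  -- PJ bound
  have hPJ' : J^2/(4*m^2) ≤ PJ := pen_PJ_lb m J hm f PJ hPJ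
  -- In bounds
  have hInlb : ∀ n ∈ Finset.Icc 2 N0,
      -(((n:ℝ)*((n:ℝ)+1)/2 - 1) * (Xf n (m/2))^2
        / ((2*((n:ℝ)*((n:ℝ)+1)/2-1)+3)*m)) ≤ In n := by
    intro n hn
    rw [Finset.mem_Icc] at hn
    obtain ⟨L, hL⟩ := hSq n hn.1 hn.2
    exact pen_In_lb m hm n hn.1 (Xf n) (Yf n) (hXf n hn.2) (hXbdd n hn.2) (In n) L
      (hIn n hn.1 hn.2) hL
  have hn2R : ∀ n ∈ Finset.Icc 2 N0, (2:ℝ) ≤ (n:ℝ) := by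
    intro n hn
    rw [Finset.mem_Icc] at hn
    exact_mod_cast hn.1
  have hcCnn : ∀ n ∈ Finset.Icc 2 N0, 0 ≤ cC n := by
    intro n hn
    have h2 := hn2R n hn
    unfold cC
    apply div_nonneg (by positivity)
    have e1 : (0:ℝ) ≤ (n:ℝ) - 1 := by linarith
    have e2 : (0:ℝ) ≤ (n:ℝ) + 2 := by linarith
    have e3 : (0:ℝ) ≤ 2*(n:ℝ) + 1 := by linarith
    exact mul_nonneg (mul_nonneg e1 e2) e3
  have hsum_ge :
      ∑ n ∈ Finset.Icc 2 N0, (m/2 * (cC n * (-(((n:ℝ)*((n:ℝ)+1)/2 - 1) * (Xf n (m/2))^2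
          / ((2*((n:ℝ)*((n:ℝ)+1)/2-1)+3)*m)))))
        ≤ m / 2 * ∑ n ∈ Finset.Icc 2 N0, cC n * In n := by
    rw [Finset.mul_sum]
    apply Finset.sum_le_sum
    intro n hn
    have h1 := hInlb n hn
    have h2 := hcCnn n hn
    have h3 : cC n * (-(((n:ℝ)*((n:ℝ)+1)/2 - 1) * (Xf n (m/2))^2
        / ((2*((n:ℝ)*((n:ℝ)+1)/2-1)+3)*m))) ≤ cC n * In n :=
      mul_le_mul_of_nonneg_left h1 h2
    exact mul_le_mul_of_nonneg_left h3 (by linarith)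
  -- sum splitting
  have hsplit : Finset.range (N0+1) = insert 0 (insert 1 (Finset.Icc 2 N0)) := by
    ext k
    simp only [Finset.mem_range, Finset.mem_insert, Finset.mem_Icc]
    omega
  have h0mem : (0:ℕ) ∉ insert 1 (Finset.Icc 2 N0) := by simp
  have h1mem : (1:ℕ) ∉ Finset.Icc 2 N0 := by simp
  have hS3 : ∑ n ∈ Finset.range (N0 + 1), (Xf n (m / 2)) ^ 2 / (2 * (n : ℝ) + 1) ^ 3
      = (Xf 0 (m/2))^2 + (Xf 1 (m/2))^2/27
        + ∑ n ∈ Finset.Icc 2 N0, (Xf n (m / 2)) ^ 2 / (2 * (n : ℝ) + 1) ^ 3 := by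
    rw [hsplit, Finset.sum_insert h0mem, Finset.sum_insert h1mem]
    norm_num
    ring
  have hS1 : ∑ n ∈ Finset.range (N0 + 1), (Xf n (m / 2)) ^ 2 / (2 * (n : ℝ) + 1)
      = (Xf 0 (m/2))^2 + (Xf 1 (m/2))^2/3
        + ∑ n ∈ Finset.Icc 2 N0, (Xf n (m / 2)) ^ 2 / (2 * (n : ℝ) + 1) := by
    rw [hsplit, Finset.sum_insert h0mem, Finset.sum_insert h1mem]
    norm_num
    ring
  -- per-term identity
  have hterm : ∀ n ∈ Finset.Icc 2 N0,
      (m/2 * (cC n * (-(((n:ℝ)*((n:ℝ)+1)/2 - 1) * (Xf n (m/2))^2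
          / ((2*((n:ℝ)*((n:ℝ)+1)/2-1)+3)*m)))))
        = 3/2 * ((Xf n (m / 2)) ^ 2 / (2 * (n : ℝ) + 1) ^ 3)
          - 1/2 * ((Xf n (m / 2)) ^ 2 / (2 * (n : ℝ) + 1))
          + (((n : ℝ) - 1) * ((n : ℝ) + 2) * (Xf n (m / 2)) ^ 2) /
              (2 * ((n : ℝ) ^ 2 + (n : ℝ) + 1) * (2 * (n : ℝ) + 1) ^ 3) := by
    intro n hn
    have h2 := hn2R n hn
    have d1 : (2*(n:ℝ)+1) ≠ 0 := by nlinarith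
    have d2 : ((n:ℝ)-1) ≠ 0 := by nlinarith
    have d3 : ((n:ℝ)+2) ≠ 0 := by nlinarith
    have d4 : ((n:ℝ)^2+(n:ℝ)+1) ≠ 0 := by nlinarith
    rw [show (2*((n:ℝ)*((n:ℝ)+1)/2-1)+3) = ((n:ℝ)^2+(n:ℝ)+1) from by ring]
    unfold cC
    rw [div_mul_eq_mul_div, div_mul_eq_mul_div]
    field_simp [d1, d2, d3, d4, hm']
    ring
  have hsum_eq :
      ∑ n ∈ Finset.Icc 2 N0, (m/2 * (cC n * (-(((n:ℝ)*((n:ℝ)+1)/2 - 1) * (Xf n (m/2))^2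
          / ((2*((n:ℝ)*((n:ℝ)+1)/2-1)+3)*m)))))
        = 3/2 * (∑ n ∈ Finset.Icc 2 N0, (Xf n (m / 2)) ^ 2 / (2 * (n : ℝ) + 1) ^ 3)
          - 1/2 * (∑ n ∈ Finset.Icc 2 N0, (Xf n (m / 2)) ^ 2 / (2 * (n : ℝ) + 1))
          + ∑ n ∈ Finset.Icc 2 N0,
            (((n : ℝ) - 1) * ((n : ℝ) + 2) * (Xf n (m / 2)) ^ 2) /
              (2 * ((n : ℝ) ^ 2 + (n : ℝ) + 1) * (2 * (n : ℝ) + 1) ^ 3) := by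
    rw [Finset.sum_congr rfl hterm, Finset.sum_add_distrib, Finset.sum_sub_distrib,
      ← Finset.mul_sum, ← Finset.mul_sum]
  linarith [hsum_ge, hPJ', he1, hS3, hS1, hsum_eq]
end
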